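/- Fix real numbers a, b, c ≥ 0 with a + b + c = 1, and define ζ(z) as above and the parametrized curve 𝔅 = {(x(z), y(z)) : z ∈ [0,∞]} where x(z) = ζ'(z) and y(z) = z·ζ'(z) − ζ(z). Then (x(0), y(0)) = (1/2 + bc/(a+c), 0) and lim_{z→∞}(x(z), y(z)) = (1+b, 1/2 + ab/(b+c)). -/

import Mathlib

open Real Filter

/-- The function `ζ(z)` from the arctic-curve parametrization. -/
noncomputable def zeta (a b c z : ℝ) : ℝ :=
  Real.sqrt (z ^ 2 + z + 1) + Real.sqrt ((z * b + z * c + a + c) ^ 2 - 4 * a * b * z) / 2 +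
    ((b - c) * z - a - c) / 2 - 1

/-- The explicit derivative `ζ'(z)`. -/
noncomputable def zeta' (a b c z : ℝ) : ℝ :=
  (2 * z + 1) / (2 * Real.sqrt (z ^ 2 + z + 1)) +
    ((b + c) ^ 2 * z - a * b + a * c + b * c + c ^ 2) /
      (2 * Real.sqrt ((z * b + z * c + a + c) ^ 2 - 4 * a * b * z)) +
    (b - c) / 2

/-- The `x`-coordinate of the curve `𝔅`. -/
noncomputable def xCurve (a b c z : ℝ) : ℝ := zeta' a b c z

/-- The `y`-coordinate of the curve `𝔅`. -/
noncomputable def yCurve (a b c z : ℝ) : ℝ := z * zeta' a b c z - zeta a b c z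

/-- `x(z)` rewritten as a function of `t = 1/z`. -/
noncomputable def Xf (a b c t : ℝ) : ℝ :=
  (2 + t) / (2 * Real.sqrt (1 + t + t^2)) +
  ((b+c)^2 + (a*c + b*c + c^2 - a*b)*t) / (2 * Real.sqrt ((b+c+(a+c)*t)^2 - 4*a*b*t)) +
  (b-c)/2

/-- `y(z)` rewritten as a function of `t = 1/z`. -/
noncomputable def Yf (a b c t : ℝ) : ℝ :=
  (-1 - 2*t) / (2 * Real.sqrt (1 + t + t^2)) +
  ((a*b - c) - (a+c)^2*t) / (2 * Real.sqrt ((b+c+(a+c)*t)^2 - 4*a*b*t)) + (a+c)/2 + 1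

lemma q1_pos' (t : ℝ) : 0 < 1 + t + t^2 := by nlinarith [sq_nonneg (2*t+1)]

lemma q2_pos' {a b c t : ℝ} (ha : 0 < a) (hb : 0 < b) (hc : 0 < c) (ht : 0 < t) :
    0 < (b+c+(a+c)*t)^2 - 4*a*b*t := by
  nlinarith [sq_nonneg (b+c-(a+c)*t), mul_pos ht (mul_pos hc (by linarith : (0:ℝ) < a+b+c))]

lemma eqX' (a b c : ℝ) (ha : 0 < a) (hb : 0 < b) (hc : 0 < c) {z : ℝ} (hz : 0 < z) :
    xCurve a b c z = Xf a b c (1/z) := by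
  have hz' : z ≠ 0 := hz.ne'
  have hQ1 : z^2 + z + 1 = z^2 * (1 + 1/z + (1/z)^2) := by field_simp
  have hQ2 : (z*b+z*c+a+c)^2 - 4*a*b*z
      = z^2 * ((b+c+(a+c)*(1/z))^2 - 4*a*b*(1/z)) := by field_simp; ring
  have hs1 : Real.sqrt (z^2+z+1) = z * Real.sqrt (1+1/z+(1/z)^2) := by
    rw [hQ1, Real.sqrt_mul (sq_nonneg z), Real.sqrt_sq hz.le]
  have hs2 : Real.sqrt ((z*b+z*c+a+c)^2 - 4*a*b*z)
      = z * Real.sqrt ((b+c+(a+c)*(1/z))^2 - 4*a*b*(1/z)) := by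
    rw [hQ2, Real.sqrt_mul (sq_nonneg z), Real.sqrt_sq hz.le]
  have p1 : 0 < Real.sqrt (1+1/z+(1/z)^2) := Real.sqrt_pos.2 (q1_pos' _)
  have p2 : 0 < Real.sqrt ((b+c+(a+c)*(1/z))^2 - 4*a*b*(1/z)) :=
    Real.sqrt_pos.2 (q2_pos' ha hb hc (by positivity))
  unfold xCurve zeta' Xf
  rw [hs1, hs2]
  field_simp
  ring

lemma eqY' (a b c : ℝ) (ha : 0 < a) (hb : 0 < b) (hc : 0 < c) (habc : a + b + c = 1)
    {z : ℝ} (hz : 0 < z) : yCurve a b c z = Yf a b c (1/z) := by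
  have hz' : z ≠ 0 := hz.ne'
  have hQ1 : z^2 + z + 1 = z^2 * (1 + 1/z + (1/z)^2) := by field_simp
  have hQ2 : (z*b+z*c+a+c)^2 - 4*a*b*z
      = z^2 * ((b+c+(a+c)*(1/z))^2 - 4*a*b*(1/z)) := by field_simp; ring
  have hs1 : Real.sqrt (z^2+z+1) = z * Real.sqrt (1+1/z+(1/z)^2) := by
    rw [hQ1, Real.sqrt_mul (sq_nonneg z), Real.sqrt_sq hz.le]
  have hs2 : Real.sqrt ((z*b+z*c+a+c)^2 - 4*a*b*z)
      = z * Real.sqrt ((b+c+(a+c)*(1/z))^2 - 4*a*b*(1/z)) := by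
    rw [hQ2, Real.sqrt_mul (sq_nonneg z), Real.sqrt_sq hz.le]
  set s : ℝ := Real.sqrt (1+1/z+(1/z)^2) with hsdef
  set u : ℝ := Real.sqrt ((b+c+(a+c)*(1/z))^2 - 4*a*b*(1/z)) with hudef
  have p1 : 0 < s := Real.sqrt_pos.2 (q1_pos' _)
  have p2 : 0 < u := Real.sqrt_pos.2 (q2_pos' ha hb hc (by positivity))
  have hsq1' : z^2*s^2 = z^2 + z + 1 := by
    rw [hsdef, Real.sq_sqrt (q1_pos' _).le]; field_simp
  have hsq2' : z^2*u^2 = (z*b+z*c+a+c)^2 - 4*a*b*z := by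
    rw [hudef, Real.sq_sqrt (q2_pos' ha hb hc (by positivity : (0:ℝ) < 1/z)).le, hQ2]
  have h1 : z * ((2*z+1)/(2*(z*s))) - z*s = (-1-2*(1/z))/(2*s) := by
    field_simp
    linear_combination (-2) * hsq1'
  have h2 : z * (((b+c)^2*z - a*b + a*c + b*c + c^2)/(2*(z*u))) - (z*u)/2
      = ((a*b - c) - (a+c)^2*(1/z))/(2*u) := by
    field_simp
    linear_combination (-1)*hsq2' + (-z*c)*habc
  unfold yCurve zeta zeta' Yf
  rw [hs1, hs2]
  linear_combination h1 + h2

lemma contXf (a b c : ℝ) (hb : 0 < b) (hc : 0 < c) :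
    ContinuousAt (Xf a b c) 0 ∧ ContinuousAt (Yf a b c) 0 := by
  have h1 : Continuous fun t : ℝ => 2 * Real.sqrt (1 + t + t^2) :=
    continuous_const.mul (Real.continuous_sqrt.comp (by continuity))
  have h2 : Continuous fun t : ℝ => 2 * Real.sqrt ((b+c+(a+c)*t)^2 - 4*a*b*t) :=
    continuous_const.mul (Real.continuous_sqrt.comp (by continuity))
  have hn1 : (2 : ℝ) * Real.sqrt (1 + 0 + 0^2) ≠ 0 := by
    norm_num
  have hn2 : (2 : ℝ) * Real.sqrt ((b+c+(a+c)*0)^2 - 4*a*b*0) ≠ 0 := by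
    have : ((b+c+(a+c)*0)^2 - 4*a*b*0) = (b+c)^2 := by ring
    rw [this, Real.sqrt_sq (by linarith)]
    positivity
  constructor
  · apply ContinuousAt.add
    apply ContinuousAt.add
    · exact ContinuousAt.div (by fun_prop) h1.continuousAt hn1
    · exact ContinuousAt.div (by fun_prop) h2.continuousAt hn2
    · exact continuousAt_const
  · apply ContinuousAt.add
    apply ContinuousAt.add
    apply ContinuousAt.add
    · exact ContinuousAt.div (by fun_prop) h1.continuousAt hn1
    · exact ContinuousAt.div (by fun_prop) h2.continuousAt hn2
    · exact continuousAt_const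
    · exact continuousAt_const

/-- Endpoints of the curve `𝔅`: `(x(0), y(0)) = (1/2 + bc/(a+c), 0)` and
`lim_{z→∞} (x(z), y(z)) = (1+b, 1/2 + ab/(b+c))`. -/
theorem curve_endpoints (a b c : ℝ) (ha : 0 < a) (hb : 0 < b) (hc : 0 < c)
    (habc : a + b + c = 1) :
    (xCurve a b c 0, yCurve a b c 0) = (1 / 2 + b * c / (a + c), 0) ∧
    Tendsto (fun z => (xCurve a b c z, yCurve a b c z)) atTop
      (nhds (1 + b, 1 / 2 + a * b / (b + c))) := by
  have hac : (0:ℝ) < a + c := by linarith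
  have hbc : (0:ℝ) < b + c := by linarith
  constructor
  · have h1 : Real.sqrt ((0 * b + 0 * c + a + c) ^ 2 - 4 * a * b * 0) = a + c := by
      rw [show (0 * b + 0 * c + a + c) ^ 2 - 4 * a * b * 0 = (a+c)^2 by ring,
        Real.sqrt_sq hac.le]
    have hx : xCurve a b c 0 = 1 / 2 + b * c / (a + c) := by
      unfold xCurve zeta'
      rw [h1, show (0:ℝ)^2 + 0 + 1 = 1 by ring, Real.sqrt_one]
      field_simp
      ring
    have hy : yCurve a b c 0 = 0 := by
      unfold yCurve zeta zeta'
      rw [h1, show (0:ℝ)^2 + 0 + 1 = 1 by ring, Real.sqrt_one]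
      ring
    rw [hx, hy]
  · obtain ⟨hcX, hcY⟩ := contXf a b c hb hc
    have hinv : Tendsto (fun z : ℝ => 1/z) atTop (nhds 0) := by
      simpa only [one_div] using tendsto_inv_atTop_zero
    have hX0 : Xf a b c 0 = 1 + b := by
      unfold Xf
      rw [show (1:ℝ) + 0 + 0^2 = 1 by ring, Real.sqrt_one,
        show ((b+c+(a+c)*0)^2 - 4*a*b*0 : ℝ) = (b+c)^2 by ring,
        Real.sqrt_sq hbc.le]
      field_simp
      ring
    have hY0 : Yf a b c 0 = 1 / 2 + a * b / (b + c) := by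
      unfold Yf
      rw [show (1:ℝ) + 0 + 0^2 = 1 by ring, Real.sqrt_one,
        show ((b+c+(a+c)*0)^2 - 4*a*b*0 : ℝ) = (b+c)^2 by ring,
        Real.sqrt_sq hbc.le]
      field_simp
      linear_combination c*habc
    have hXlim : Tendsto (fun z => xCurve a b c z) atTop (nhds (1 + b)) := by
      have := (hcX.tendsto.comp hinv)
      rw [hX0] at this
      apply this.congr'
      filter_upwards [eventually_gt_atTop (0:ℝ)] with z hz
      exact (eqX' a b c ha hb hc hz).symm
    have hYlim : Tendsto (fun z => yCurve a b c z) atTop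
        (nhds (1 / 2 + a * b / (b + c))) := by
      have := (hcY.tendsto.comp hinv)
      rw [hY0] at this
      apply this.congr'
      filter_upwards [eventually_gt_atTop (0:ℝ)] with z hz
      exact (eqY' a b c ha hb hc habc hz).symm
    exact hXlim.prodMk_nhds hYlim
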